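/- Let a = 31207386885274502188173522132023665167365193670823768234185354856354918873864275 and M = 36812852443922071184402498913076070503146229820861211558347078871354783744850778, and for n ∈ ℕ set u_n = F_{3n}/2. Then for every integer x with x ≡ a (mod M) and all k, b ∈ ℕ, one has x² − u_{2+6k} ≠ 19^b and x² − u_{2+6k} ≠ −19^b. -/
import Mathlib

/-- `u n = F_{3n} / 2`, an integer since `F_{3n}` is always even. -/
def u (n : ℕ) : ℤ := (Nat.fib (3 * n) : ℤ) / 2

/-- Half-Fibonacci auxiliary sequence: `v n = F_{3n} / 2` as a natural number. -/
def v : ℕ → ℕ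
  | 0 => 0
  | 1 => 1
  | n + 2 => 4 * v (n + 1) + v n

lemma v_step (n : ℕ) : v (n + 2) = 4 * v (n + 1) + v n := rfl

lemma two_v (n : ℕ) : 2 * v n = Nat.fib (3 * n) := by
  induction n using Nat.twoStepInduction with
  | zero => rfl
  | one => rfl
  | more n ih1 ih2 =>
    have f2 : Nat.fib (3*n+2) = Nat.fib (3*n) + Nat.fib (3*n+1) := Nat.fib_add_two
    have f3 : Nat.fib (3*n+3) = Nat.fib (3*n+1) + Nat.fib (3*n+2) := Nat.fib_add_two
    have f4 : Nat.fib (3*n+4) = Nat.fib (3*n+2) + Nat.fib (3*n+3) := Nat.fib_add_two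
    have f5 : Nat.fib (3*n+5) = Nat.fib (3*n+3) + Nat.fib (3*n+4) := Nat.fib_add_two
    have f6 : Nat.fib (3*n+6) = Nat.fib (3*n+4) + Nat.fib (3*n+5) := Nat.fib_add_two
    have hv : v (n+2) = 4 * v (n+1) + v n := rfl
    have e1 : 3 * (n+1) = 3*n+3 := by ring
    have e2 : 3 * (n+2) = 3*n+6 := by ring
    rw [e1] at ih2
    rw [e2, hv]
    omega

lemma u_eq_v (n : ℕ) : u n = (v n : ℤ) := by
  unfold u
  rw [← two_v]
  push_cast
  rw [Int.mul_ediv_cancel_left _ two_ne_zero]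

lemma v_per (n : ℕ) :
    ((v (n + 30) : ZMod 181) = v n) ∧ ((v (n + 31) : ZMod 181) = v (n + 1)) := by
  induction n with
  | zero =>
    constructor
    · show ((v 30 : ℕ) : ZMod 181) = ((v 0 : ℕ) : ZMod 181)
      norm_num [show v 30 = 1440033597185408060 from rfl, show v 0 = 0 from rfl]
      decide
    · show ((v 31 : ℕ) : ZMod 181) = ((v 1 : ℕ) : ZMod 181)
      norm_num [show v 31 = 6100080207560938369 from rfl, show v 1 = 1 from rfl]
      decide
  | succ n ih =>
    obtain ⟨h1, h2⟩ := ih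
    refine ⟨h2, ?_⟩
    have hs : v (n + 32) = 4 * v (n + 31) + v (n + 30) := v_step (n + 30)
    have ht : v (n + 2) = 4 * v (n + 1) + v n := v_step n
    show ((v (n + 32) : ℕ) : ZMod 181) = ((v (n + 2) : ℕ) : ZMod 181)
    rw [hs, ht]
    push_cast
    rw [h1, h2]

lemma v_reduce (q r : ℕ) :
    ((v (2 + 6 * (5 * q + r)) : ZMod 181)) = (v (2 + 6 * r) : ZMod 181) := by
  induction q with
  | zero => norm_num
  | succ q ih =>
    have e : 2 + 6 * (5 * (q + 1) + r) = (2 + 6 * (5 * q + r)) + 30 := by ring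
    rw [e, (v_per _).1, ih]

theorem sq_sub_u_ne_pm_pow_19
    (x : ℤ)
    (hx : x ≡ 31207386885274502188173522132023665167365193670823768234185354856354918873864275
      [ZMOD 36812852443922071184402498913076070503146229820861211558347078871354783744850778])
    (k b : ℕ) :
    x ^ 2 - u (2 + 6 * k) ≠ 19 ^ b ∧ x ^ 2 - u (2 + 6 * k) ≠ -(19 ^ b) := by
  have hx181 : ((x : ZMod 181)) = 76 := by
    have hd : (181 : ℤ) ∣ 36812852443922071184402498913076070503146229820861211558347078871354783744850778 := by
      norm_num
    have h1 := (hx.of_dvd hd)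
    have h2 : ((x : ZMod 181)) =
        ((31207386885274502188173522132023665167365193670823768234185354856354918873864275 : ℤ) : ZMod 181) := by
      rw [ZMod.intCast_eq_intCast_iff]
      exact_mod_cast h1
    rw [h2]
    decide
  have hpow : (19 : ZMod 181) ^ b = 19 ^ (b % 4) := by
    conv_lhs => rw [← Nat.div_add_mod b 4]
    rw [pow_add, pow_mul, (by decide : (19 : ZMod 181) ^ 4 = 1), one_pow, one_mul]
  have hk : k = 5 * (k / 5) + k % 5 := (Nat.div_add_mod k 5).symm
  have hv : ((v (2 + 6 * k) : ℕ) : ZMod 181) = (v (2 + 6 * (k % 5)) : ZMod 181) := by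
    conv_lhs => rw [hk]
    exact v_reduce _ _
  have hu := u_eq_v (2 + 6 * k)
  constructor
  · intro h
    have hc : ((x ^ 2 - u (2 + 6 * k) : ℤ) : ZMod 181) = ((19 ^ b : ℤ) : ZMod 181) :=
      congrArg _ h
    rw [hu] at hc
    push_cast at hc
    rw [hx181, hpow] at hc
    rw [hv] at hc
    have hr : k % 5 < 5 := Nat.mod_lt _ (by norm_num)
    have hb : b % 4 < 4 := Nat.mod_lt _ (by norm_num)
    interval_cases h : k % 5 <;> interval_cases h' : b % 4 <;> revert hc <;> decide
  · intro h
    have hc : ((x ^ 2 - u (2 + 6 * k) : ℤ) : ZMod 181) = ((-(19 ^ b) : ℤ) : ZMod 181) :=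
      congrArg _ h
    rw [hu] at hc
    push_cast at hc
    rw [hx181, hpow] at hc
    rw [hv] at hc
    have hr : k % 5 < 5 := Nat.mod_lt _ (by norm_num)
    have hb : b % 4 < 4 := Nat.mod_lt _ (by norm_num)
    interval_cases h : k % 5 <;> interval_cases h' : b % 4 <;> revert hc <;> decide
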